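/- arXiv:1504.06556 — 6 statements merged into one kernel-verified Lean document; each statement's English description precedes it below -/
import Mathlib

section
/- Let μ be a (nonnegative) measure on [0,∞) and let h₁, h₂ : [0,∞) → ℂ be μ-integrable. If ∫_{[0,∞)} e^{−s t} h₁(t) dμ(t) = ∫_{[0,∞)} e^{−s t} h₂(t) dμ(t) for every real s ≥ 0, then h₁ = h₂ μ-almost everywhere. -/
open MeasureTheory

/-- **Uniqueness theorem for Laplace transforms.**
If `μ` is a (nonnegative) measure on `[0,∞)` and `h₁, h₂` are `μ`-integrable complex densities
whose Laplace transforms agree at every real `s ≥ 0`, then `h₁ = h₂` `μ`-almost everywhere. -/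
theorem laplace_uniqueness (μ : Measure ℝ) (h₁ h₂ : ℝ → ℂ)
    (hi₁ : IntegrableOn h₁ (Set.Ici 0) μ) (hi₂ : IntegrableOn h₂ (Set.Ici 0) μ)
    (heq : ∀ s : ℝ, 0 ≤ s →
      ∫ t in Set.Ici (0 : ℝ), (Real.exp (-(s * t)) : ℂ) * h₁ t ∂μ =
      ∫ t in Set.Ici (0 : ℝ), (Real.exp (-(s * t)) : ℂ) * h₂ t ∂μ) :
    ∀ᵐ t ∂μ.restrict (Set.Ici 0), h₁ t = h₂ t := by
  set ν := μ.restrict (Set.Ici 0) with hνdef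
  set f : ℝ → ℂ := fun t => h₁ t - h₂ t with hfdef
  have hf : Integrable f ν := hi₁.sub hi₂
  have hmem : ∀ᵐ t ∂ν, t ∈ Set.Ici (0 : ℝ) := ae_restrict_mem measurableSet_Ici
  -- integrability of bounded continuous multipliers against `f`
  have hint : ∀ φ : ℝ → ℝ, ContinuousOn φ (Set.Ici 0) →
      (∃ C, ∀ t ∈ Set.Ici (0 : ℝ), |φ t| ≤ C) →
      Integrable (fun t => (φ t : ℂ) * f t) ν := by
    rintro φ hφ ⟨C, hC⟩
    apply hf.bdd_mul (c := C)
    · exact (Complex.continuous_ofReal.comp_continuousOn hφ).aestronglyMeasurable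
        measurableSet_Ici
    · filter_upwards [hmem] with t ht
      simpa using hC t ht
  -- integrability of exponential multipliers against integrable functions
  have hexpint : ∀ (s : ℝ), 0 ≤ s → ∀ (h : ℝ → ℂ), Integrable h ν →
      Integrable (fun t => (Real.exp (-(s * t)) : ℂ) * h t) ν := by
    intro s hs h hh
    apply hh.bdd_mul (c := 1)
    · exact (Complex.continuous_ofReal.comp
        (Real.continuous_exp.comp (continuous_const.mul continuous_id).neg)).aestronglyMeasurable
    · filter_upwards [hmem] with t ht
      have h1 : Real.exp (-(s * t)) ≤ Real.exp 0 :=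
        Real.exp_le_exp.mpr (by nlinarith [mul_nonneg hs ht])
      rw [Real.exp_zero] at h1
      rw [Complex.norm_real, Real.norm_eq_abs, abs_of_nonneg (Real.exp_nonneg _)]
      exact h1
  -- Step A: the Laplace transform of `f` vanishes
  have hA : ∀ s : ℝ, 0 ≤ s → ∫ t, (Real.exp (-(s * t)) : ℂ) * f t ∂ν = 0 := by
    intro s hs
    have e1 := hexpint s hs h₁ hi₁
    have e2 := hexpint s hs h₂ hi₂
    have : (fun t => (Real.exp (-(s * t)) : ℂ) * f t)
        = fun t => (Real.exp (-(s * t)) : ℂ) * h₁ t - (Real.exp (-(s * t)) : ℂ) * h₂ t := by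
      funext t; simp [hfdef, mul_sub]
    rw [this, integral_sub e1 e2, heq s hs, sub_self]
  -- Step B: monomials
  have hmono : ∀ n : ℕ, ∫ t, ((Real.exp (-t) ^ n : ℝ) : ℂ) * f t ∂ν = 0 := by
    intro n
    have := hA n (Nat.cast_nonneg n)
    have hrw : ∀ t : ℝ, Real.exp (-((n : ℝ) * t)) = Real.exp (-t) ^ n := by
      intro t
      rw [show -((n : ℝ) * t) = (n : ℝ) * (-t) by ring, Real.exp_nat_mul]
    simpa only [hrw] using this
  -- integrability of monomial multipliers
  have hmonoint : ∀ n : ℕ, Integrable (fun t => ((Real.exp (-t) ^ n : ℝ) : ℂ) * f t) ν := by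
    intro n
    refine hint (fun t => Real.exp (-t) ^ n)
      ((Real.continuous_exp.comp continuous_neg).pow n).continuousOn ⟨1, fun t ht => ?_⟩
    rw [abs_of_nonneg (by positivity)]
    refine pow_le_one₀ (Real.exp_nonneg _) ?_
    have h1 : Real.exp (-t) ≤ Real.exp 0 := Real.exp_le_exp.mpr (neg_nonpos.mpr ht)
    rwa [Real.exp_zero] at h1
  -- Step C: polynomials
  have hP : ∀ q : Polynomial ℝ, ∫ t, ((q.eval (Real.exp (-t)) : ℝ) : ℂ) * f t ∂ν = 0 := by
    intro q
    have expand : ∀ t : ℝ, ((q.eval (Real.exp (-t)) : ℝ) : ℂ) * f t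
        = ∑ i ∈ Finset.range (q.natDegree + 1),
            (q.coeff i : ℂ) * (((Real.exp (-t) ^ i : ℝ) : ℂ) * f t) := by
      intro t
      rw [Polynomial.eval_eq_sum_range]
      push_cast
      rw [Finset.sum_mul]
      exact Finset.sum_congr rfl fun i _ => by ring
    rw [show (fun t => ((q.eval (Real.exp (-t)) : ℝ) : ℂ) * f t)
        = fun t => ∑ i ∈ Finset.range (q.natDegree + 1),
            (q.coeff i : ℂ) * (((Real.exp (-t) ^ i : ℝ) : ℂ) * f t) from funext expand]
    rw [integral_finset_sum _ fun i _ => (hmonoint i).const_mul _]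
    refine Finset.sum_eq_zero fun i _ => ?_
    rw [integral_const_mul, hmono i, mul_zero]
  -- Step D: continuous functions via Weierstrass approximation
  have hD : ∀ G : ℝ → ℝ, ContinuousOn G (Set.Icc 0 1) →
      ∫ t, ((G (Real.exp (-t)) : ℝ) : ℂ) * f t ∂ν = 0 := by
    intro G hG
    have hmap : ∀ t ∈ Set.Ici (0 : ℝ), Real.exp (-t) ∈ Set.Icc (0 : ℝ) 1 := by
      intro t ht
      refine ⟨Real.exp_nonneg _, ?_⟩
      have h1 : Real.exp (-t) ≤ Real.exp 0 := Real.exp_le_exp.mpr (neg_nonpos.mpr ht)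
      rwa [Real.exp_zero] at h1
    have hbd : ∀ (H : ℝ → ℝ), ContinuousOn H (Set.Icc 0 1) →
        ∃ C, ∀ t ∈ Set.Ici (0 : ℝ), |H (Real.exp (-t))| ≤ C := by
      intro H hH
      obtain ⟨C, hC⟩ := isCompact_Icc.exists_bound_of_continuousOn hH
      exact ⟨C, fun t ht => hC _ (hmap t ht)⟩
    have hcomp : ∀ (H : ℝ → ℝ), ContinuousOn H (Set.Icc 0 1) →
        ContinuousOn (fun t => H (Real.exp (-t))) (Set.Ici 0) :=
      fun H hH => hH.comp (Real.continuous_exp.comp continuous_neg).continuousOn hmap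
    have hGint : Integrable (fun t => ((G (Real.exp (-t)) : ℝ) : ℂ) * f t) ν :=
      hint _ (hcomp G hG) (hbd G hG)
    set A := ∫ t, ‖f t‖ ∂ν with hAdef
    have hAnn : 0 ≤ A := integral_nonneg fun t => norm_nonneg _
    set I := ∫ t, ((G (Real.exp (-t)) : ℝ) : ℂ) * f t ∂ν with hIdef
    have key : ∀ ε : ℝ, 0 < ε → ‖I‖ ≤ ε * A := by
      intro ε hε
      obtain ⟨p, hp⟩ := exists_polynomial_near_of_continuousOn 0 1 G hG ε hε
      have hpc : ContinuousOn (fun x => p.eval x) (Set.Icc 0 1) :=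
        p.continuous_aeval.continuousOn
      have hpint : Integrable (fun t => ((p.eval (Real.exp (-t)) : ℝ) : ℂ) * f t) ν :=
        hint _ (hcomp _ hpc) (hbd _ hpc)
      have hdiffint : Integrable
          (fun t => (((G (Real.exp (-t)) - p.eval (Real.exp (-t))) : ℝ) : ℂ) * f t) ν := by
        obtain ⟨C1, hC1⟩ := hbd G hG
        obtain ⟨C2, hC2⟩ := hbd _ hpc
        refine hint _ ((hcomp G hG).sub (hcomp _ hpc)) ⟨C1 + C2, fun t ht => ?_⟩
        calc |G (Real.exp (-t)) - p.eval (Real.exp (-t))|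
            ≤ |G (Real.exp (-t))| + |p.eval (Real.exp (-t))| := abs_sub _ _
          _ ≤ C1 + C2 := add_le_add (hC1 t ht) (hC2 t ht)
      have hsub : I = ∫ t,
          (((G (Real.exp (-t)) - p.eval (Real.exp (-t))) : ℝ) : ℂ) * f t ∂ν := by
        have : (fun t => (((G (Real.exp (-t)) - p.eval (Real.exp (-t))) : ℝ) : ℂ) * f t)
            = fun t => ((G (Real.exp (-t)) : ℝ) : ℂ) * f t
                - ((p.eval (Real.exp (-t)) : ℝ) : ℂ) * f t := by
          funext t; push_cast; ring
        rw [this, integral_sub hGint hpint, hP p, sub_zero, hIdef]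
      rw [hsub]
      calc ‖∫ t, (((G (Real.exp (-t)) - p.eval (Real.exp (-t))) : ℝ) : ℂ) * f t ∂ν‖
          ≤ ∫ t, ‖(((G (Real.exp (-t)) - p.eval (Real.exp (-t))) : ℝ) : ℂ) * f t‖ ∂ν :=
            norm_integral_le_integral_norm _
        _ ≤ ∫ t, ε * ‖f t‖ ∂ν := by
            refine integral_mono_ae hdiffint.norm (hf.norm.const_mul ε) ?_
            filter_upwards [hmem] with t ht
            rw [norm_mul]
            gcongr
            have := hp _ (hmap t ht)
            simp only [Complex.norm_real, Real.norm_eq_abs]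
            rw [abs_sub_comm] at this
            exact le_of_lt this
        _ = ε * A := by rw [integral_const_mul]
    have hI0 : ‖I‖ ≤ 0 := by
      refine le_of_forall_pos_le_add fun ε hε => ?_
      have h1 := key (ε / (A + 1)) (by positivity)
      have h2 : ε / (A + 1) * A ≤ ε := by
        rw [div_mul_eq_mul_div, div_le_iff₀ (by linarith)]
        nlinarith
      linarith
    exact norm_le_zero_iff.mp hI0
  -- Step E: conclude via distributions
  have hz : ∀ᵐ t ∂ν, f t = 0 := by
    apply ae_eq_zero_of_integral_contDiff_smul_eq_zero hf.locallyIntegrable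
    intro g hg hgsupp
    set φ : ℝ → ℝ := fun t => Real.exp t * g t with hφdef
    have hφc : Continuous φ := Real.continuous_exp.mul hg.continuous
    have hφs : HasCompactSupport φ := hgsupp.mul_left
    obtain ⟨C, hC⟩ := hφc.bounded_above_of_compact_support hφs
    set G : ℝ → ℝ := fun x => x * φ (-Real.log x) with hGdef
    have hGcont : ContinuousOn G (Set.Icc 0 1) := by
      intro x hx
      rcases eq_or_lt_of_le hx.1 with h0 | h0
      · have hcw : ContinuousWithinAt G (Set.Icc 0 1) 0 := by
          have hG0 : G 0 = 0 := by simp [hGdef]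
          rw [ContinuousWithinAt, hG0]
          apply squeeze_zero_norm' (a := fun y => C * |y|)
          · filter_upwards [self_mem_nhdsWithin] with y _
            calc ‖G y‖ = |y| * |φ (-Real.log y)| := by simp [hGdef, abs_mul]
              _ ≤ |y| * C := by
                  refine mul_le_mul_of_nonneg_left ?_ (abs_nonneg _)
                  simpa using hC (-Real.log y)
              _ = C * |y| := by ring
          · have : Filter.Tendsto (fun y : ℝ => C * |y|) (nhds 0) (nhds 0) := by
              simpa using (Continuous.tendsto (f := fun y : ℝ => C * |y|) (by fun_prop) (0 : ℝ))
            exact this.mono_left nhdsWithin_le_nhds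
        rw [← h0]; exact hcw
      · refine (ContinuousAt.continuousWithinAt ?_)
        exact continuousAt_id.mul
          (hφc.continuousAt.comp (Real.continuousAt_log h0.ne').neg)
    have hGval : ∀ t : ℝ, G (Real.exp (-t)) = g t := by
      intro t
      simp only [hGdef, hφdef, Real.log_exp, neg_neg]
      rw [← mul_assoc, ← Real.exp_add]
      simp
    have : (fun t => g t • f t) = fun t => ((G (Real.exp (-t)) : ℝ) : ℂ) * f t := by
      funext t
      rw [hGval t, Complex.real_smul]
    rw [this]
    exact hD G hGcont
  filter_upwards [hz] with t ht
  exact sub_eq_zero.mp ht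
end

section
/- Let σ be a real number, let μ be a (nonnegative) measure on [0,∞), and let h₁, h₂ : [0,∞) → ℂ be such that t ↦ e^{−σ t} h_i(t) is μ-integrable for i = 1, 2. If ∫_{[0,∞)} e^{−s t} h₁(t) dμ(t) = ∫_{[0,∞)} e^{−s t} h₂(t) dμ(t) for every real s ≥ σ, then h₁ = h₂ μ-almost everywhere. -/
open MeasureTheory

/-- Core uniqueness lemma at abscissa `0`: if `G` is integrable on `ν` (a measure already
restricted to `[0,∞)` in applications, here: `ν`-a.e. `t ≥ 0`) and all Laplace values at
`u ≥ 0` vanish, then `G = 0` a.e. -/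
theorem laplace_core (ν : Measure ℝ) (G : ℝ → ℂ)
    (hae : ∀ᵐ t ∂ν, t ∈ Set.Ici (0 : ℝ))
    (hGint : Integrable G ν)
    (hzero : ∀ u : ℝ, 0 ≤ u → ∫ t, (Real.exp (-(u * t)) : ℂ) * G t ∂ν = 0) :
    ∀ᵐ t ∂ν, G t = 0 := by
  -- replace G by a strongly measurable representative
  obtain ⟨G', hG'sm, hGG'⟩ : ∃ G', StronglyMeasurable G' ∧ G =ᵐ[ν] G' :=
    ⟨hGint.1.mk G, hGint.1.stronglyMeasurable_mk, hGint.1.ae_eq_mk⟩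
  have hG'int : Integrable G' ν := hGint.congr hGG'
  have hzero' : ∀ u : ℝ, 0 ≤ u → ∫ t, (Real.exp (-(u * t)) : ℂ) * G' t ∂ν = 0 := by
    intro u hu
    rw [← hzero u hu]
    exact integral_congr_ae (hGG'.mono fun t ht => by rw [ht]) |>.symm
  -- push forward by φ t = exp (-t)
  set φ : ℝ → ℝ := fun t => Real.exp (-t) with hφdef
  have hφc : Continuous φ := Real.continuous_exp.comp continuous_neg
  have hφm : Measurable φ := hφc.measurable
  set κ : Measure ℝ := Measure.map φ ν with hκdef
  set F : ℝ → ℂ := fun x => G' (-Real.log x) with hFdef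
  have hFsm : StronglyMeasurable F :=
    hG'sm.comp_measurable (measurable_neg.comp Real.measurable_log)
  have hFφ : ∀ t, F (φ t) = G' t := by
    intro t
    simp [hFdef, hφdef, Real.log_exp]
  have hFint : Integrable F κ := by
    rw [hκdef, integrable_map_measure hFsm.aestronglyMeasurable hφm.aemeasurable]
    exact hG'int.congr (Filter.Eventually.of_forall fun t => (hFφ t).symm)
  -- κ-a.e. points lie in (0, 1]
  have hκae : ∀ᵐ x ∂κ, x ∈ Set.Ioc (0 : ℝ) 1 := by
    refine (MeasureTheory.ae_map_iff hφm.aemeasurable measurableSet_Ioc).mpr ?_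
    filter_upwards [hae] with t ht
    exact ⟨Real.exp_pos _, Real.exp_le_one_iff.mpr (by simpa using ht)⟩
  -- moments vanish
  have hmom : ∀ n : ℕ, ∫ x, (x : ℂ) ^ n * F x ∂κ = 0 := by
    intro n
    have hmeas : AEStronglyMeasurable (fun x : ℝ => (x : ℂ) ^ n * F x) κ :=
      ((Complex.continuous_ofReal.pow n).stronglyMeasurable.mul hFsm).aestronglyMeasurable
    rw [hκdef, integral_map hφm.aemeasurable hmeas]
    have : ∀ t : ℝ, (φ t : ℂ) ^ n * F (φ t) = (Real.exp (-((n : ℝ) * t)) : ℂ) * G' t := by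
      intro t
      rw [hFφ]
      congr 1
      rw [← Complex.ofReal_pow, ← Real.exp_nat_mul]
      ring_nf
    rw [integral_congr_ae (Filter.Eventually.of_forall this)]
    exact hzero' _ (by positivity)
  -- polynomial integrands are integrable
  have hpint : ∀ p : Polynomial ℝ, Integrable (fun x : ℝ => ((p.eval x : ℝ) : ℂ) * F x) κ := by
    intro p
    obtain ⟨C, hC⟩ : ∃ C, ∀ x ∈ Set.Icc (0 : ℝ) 1, ‖p.eval x‖ ≤ C :=
      (isCompact_Icc).exists_bound_of_continuousOn p.continuous.continuousOn
    refine Integrable.mono' (hFint.norm.const_mul C)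
      (((Complex.continuous_ofReal.comp p.continuous).stronglyMeasurable.mul hFsm).aestronglyMeasurable) ?_
    filter_upwards [hκae] with x hx
    rw [norm_mul, Complex.norm_real]
    exact mul_le_mul_of_nonneg_right (hC x (Set.Ioc_subset_Icc_self hx)) (norm_nonneg _)
  -- polynomial moments vanish
  have hpoly : ∀ p : Polynomial ℝ, ∫ x, ((p.eval x : ℝ) : ℂ) * F x ∂κ = 0 := by
    intro p
    induction p using Polynomial.induction_on' with
    | add p q hp hq =>
      have : (fun x : ℝ => (((p + q).eval x : ℝ) : ℂ) * F x)
          = fun x : ℝ => ((p.eval x : ℝ) : ℂ) * F x + ((q.eval x : ℝ) : ℂ) * F x := by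
        funext x; push_cast [Polynomial.eval_add]; ring
      rw [this, integral_add (hpint p) (hpint q), hp, hq, add_zero]
    | monomial n a =>
      have : (fun x : ℝ => (((Polynomial.monomial n a).eval x : ℝ) : ℂ) * F x)
          = fun x : ℝ => (a : ℂ) * ((x : ℂ) ^ n * F x) := by
        funext x; push_cast [Polynomial.eval_monomial]; ring
      rw [this, integral_const_mul, hmom n, mul_zero]
  -- all smooth compactly supported tests vanish
  have htest : ∀ g : ℝ → ℝ, ContDiff ℝ (⊤ : ℕ∞) g → HasCompactSupport g →
      ∫ x, g x • F x ∂κ = 0 := by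
    intro g hg hgsupp
    have hgc : Continuous g := hg.continuous
    obtain ⟨D, hD⟩ : ∃ D, ∀ x, ‖g x‖ ≤ D := hgsupp.exists_bound_of_continuous hgc
    have hgF : Integrable (fun x : ℝ => (g x : ℂ) * F x) κ := by
      refine Integrable.mono' (hFint.norm.const_mul D)
        (((Complex.continuous_ofReal.comp hgc).stronglyMeasurable.mul hFsm).aestronglyMeasurable) ?_
      filter_upwards with x
      rw [norm_mul, Complex.norm_real]
      exact mul_le_mul_of_nonneg_right (hD x) (norm_nonneg _)
    have key : ∀ ε : ℝ, 0 < ε →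
        ‖∫ x, (g x : ℂ) * F x ∂κ‖ ≤ ε * ∫ x, ‖F x‖ ∂κ := by
      intro ε hε
      obtain ⟨p, hp⟩ := exists_polynomial_near_of_continuousOn 0 1 g hgc.continuousOn ε hε
      have hsplit : (fun x : ℝ => (g x : ℂ) * F x)
          = fun x => ((p.eval x : ℝ) : ℂ) * F x - ((p.eval x - g x : ℝ) : ℂ) * F x := by
        funext x; push_cast; ring
      rw [hsplit, integral_sub (hpint p) ((hpint p).sub hgF |>.congr
        (Filter.Eventually.of_forall fun x => by simp only [Pi.sub_apply]; push_cast; ring)), hpoly p, zero_sub, norm_neg]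
      calc ‖∫ x, ((p.eval x - g x : ℝ) : ℂ) * F x ∂κ‖
          ≤ ∫ x, ‖((p.eval x - g x : ℝ) : ℂ) * F x‖ ∂κ := norm_integral_le_integral_norm _
        _ ≤ ∫ x, ε * ‖F x‖ ∂κ := by
            refine integral_mono_ae ?_ (hFint.norm.const_mul ε) ?_
            · refine ((hpint p).sub hgF |>.congr
                (Filter.Eventually.of_forall fun x => by simp only [Pi.sub_apply]; push_cast; ring)).norm
            · filter_upwards [hκae] with x hx
              rw [norm_mul, Complex.norm_real]
              exact mul_le_mul_of_nonneg_right
                (le_of_lt (hp x (Set.Ioc_subset_Icc_self hx))) (norm_nonneg _)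
        _ = ε * ∫ x, ‖F x‖ ∂κ := integral_const_mul _ _
    have hI : ∫ x, (g x : ℂ) * F x ∂κ = 0 := by
      have hM0 : 0 ≤ ∫ x, ‖F x‖ ∂κ := integral_nonneg fun x => norm_nonneg _
      rw [← norm_le_zero_iff]
      refine le_of_forall_pos_le_add fun ε hε => ?_
      have h1 := key (ε / ((∫ x, ‖F x‖ ∂κ) + 1)) (by positivity)
      have h2 : ε / ((∫ x, ‖F x‖ ∂κ) + 1) * (∫ x, ‖F x‖ ∂κ) ≤ ε := by
        rw [div_mul_eq_mul_div, div_le_iff₀ (by positivity)]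
        nlinarith
      linarith
    simpa [Complex.real_smul] using hI
  have hF0 : ∀ᵐ x ∂κ, F x = 0 :=
    ae_eq_zero_of_integral_contDiff_smul_eq_zero hFint.locallyIntegrable htest
  have hG'0 : ∀ᵐ t ∂ν, G' t = 0 := by
    have := MeasureTheory.ae_of_ae_map hφm.aemeasurable hF0
    filter_upwards [this] with t ht
    rwa [hFφ] at ht
  filter_upwards [hG'0, hGG'] with t h1 h2
  rw [h2, h1]

/-- **Uniqueness theorem for Laplace transforms with general abscissa `σ`.**
If `t ↦ e^{-σt} hᵢ(t)` is `μ`-integrable on `[0,∞)` for `i = 1, 2` and the Laplace transforms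
agree at every real `s ≥ σ`, then `h₁ = h₂` `μ`-almost everywhere. -/
theorem laplace_uniqueness_abscissa (σ : ℝ) (μ : Measure ℝ) (h₁ h₂ : ℝ → ℂ)
    (hi₁ : IntegrableOn (fun t => (Real.exp (-(σ * t)) : ℂ) * h₁ t) (Set.Ici 0) μ)
    (hi₂ : IntegrableOn (fun t => (Real.exp (-(σ * t)) : ℂ) * h₂ t) (Set.Ici 0) μ)
    (heq : ∀ s : ℝ, σ ≤ s →
      ∫ t in Set.Ici (0 : ℝ), (Real.exp (-(s * t)) : ℂ) * h₁ t ∂μ =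
      ∫ t in Set.Ici (0 : ℝ), (Real.exp (-(s * t)) : ℂ) * h₂ t ∂μ) :
    ∀ᵐ t ∂μ.restrict (Set.Ici 0), h₁ t = h₂ t := by
  set ν := μ.restrict (Set.Ici 0) with hν
  have hae : ∀ᵐ t ∂ν, t ∈ Set.Ici (0 : ℝ) := ae_restrict_mem measurableSet_Ici
  set G : ℝ → ℂ := fun t => (Real.exp (-(σ * t)) : ℂ) * (h₁ t - h₂ t) with hG
  have hGint : Integrable G ν := by
    have := hi₁.sub hi₂
    refine this.congr (Filter.Eventually.of_forall fun t => ?_)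
    simp [hG, mul_sub]
  -- integrability at shifted abscissa
  have hshift : ∀ (u : ℝ), 0 ≤ u → ∀ (h : ℝ → ℂ),
      Integrable (fun t => (Real.exp (-(σ * t)) : ℂ) * h t) ν →
      Integrable (fun t => (Real.exp (-((σ + u) * t)) : ℂ) * h t) ν := by
    intro u hu h hint
    have hc : Continuous fun t : ℝ => (Real.exp (-(u * t)) : ℂ) := by fun_prop
    have hmeas : AEStronglyMeasurable (fun t : ℝ => (Real.exp (-((σ + u) * t)) : ℂ) * h t) ν := by
      refine (hc.aestronglyMeasurable.mul hint.1).congr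
        (Filter.Eventually.of_forall fun t => ?_)
      simp only [Pi.mul_apply]
      rw [← mul_assoc, ← Complex.ofReal_mul, ← Real.exp_add]
      have : -(u * t) + -(σ * t) = -((σ + u) * t) := by ring
      rw [this]
    refine Integrable.mono' hint.norm hmeas ?_
    filter_upwards [hae] with t ht
    rw [norm_mul, norm_mul, Complex.norm_real, Complex.norm_real,
      Real.norm_eq_abs, Real.norm_eq_abs, abs_of_pos (Real.exp_pos _),
      abs_of_pos (Real.exp_pos _)]
    have : Real.exp (-((σ + u) * t)) ≤ Real.exp (-(σ * t)) := by
      apply Real.exp_le_exp.mpr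
      have : 0 ≤ u * t := mul_nonneg hu ht
      nlinarith
    exact mul_le_mul_of_nonneg_right this (norm_nonneg _)
  have hzero : ∀ u : ℝ, 0 ≤ u → ∫ t, (Real.exp (-(u * t)) : ℂ) * G t ∂ν = 0 := by
    intro u hu
    have e1 : Integrable (fun t => (Real.exp (-((σ + u) * t)) : ℂ) * h₁ t) ν :=
      hshift u hu h₁ hi₁
    have e2 : Integrable (fun t => (Real.exp (-((σ + u) * t)) : ℂ) * h₂ t) ν :=
      hshift u hu h₂ hi₂
    have hrw : (fun t => (Real.exp (-(u * t)) : ℂ) * G t)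
        = fun t => (Real.exp (-((σ + u) * t)) : ℂ) * h₁ t
          - (Real.exp (-((σ + u) * t)) : ℂ) * h₂ t := by
      funext t
      have : Real.exp (-((σ + u) * t)) = Real.exp (-(u * t)) * Real.exp (-(σ * t)) := by
        rw [← Real.exp_add]; ring_nf
      simp only [hG, this]
      push_cast
      ring
    rw [hrw, integral_sub e1 e2, heq (σ + u) (by linarith), sub_self]
  have := laplace_core ν G hae hGint hzero
  filter_upwards [this] with t ht
  have hne : (Real.exp (-(σ * t)) : ℂ) ≠ 0 := by
    simpa using Real.exp_ne_zero (-(σ * t))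
  have := (mul_eq_zero.mp ht).resolve_left hne
  exact sub_eq_zero.mp this
end

section
/- Let σ be a real number. Suppose (a_n)_{n≥1} and (b_n)_{n≥1} are sequences of complex numbers, and (λ_n)_{n≥1} and (μ_n)_{n≥1} are strictly increasing sequences of nonnegative real numbers tending to infinity, such that ∑_{n≥1} |a_n| e^{−λ_n σ} < ∞, ∑_{n≥1} |b_n| e^{−μ_n σ} < ∞, and ∑_{n≥1} a_n e^{−λ_n s} = ∑_{n≥1} b_n e^{−μ_n s} for every real s ≥ σ. Then the two series coincide term by term after discarding zero coefficients: for every n with a_n ≠ 0 there exists m with μ_m = λ_n and b_m = a_n, and for every m with b_m ≠ 0 there exists n with λ_n = μ_m and a_n = b_m. -/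
open Filter

lemma hasSum_sumType {M : Type*} [AddCommMonoid M] [TopologicalSpace M] [ContinuousAdd M]
    {α β : Type*} {f : α ⊕ β → M} {x y : M}
    (h1 : HasSum (f ∘ Sum.inl) x) (h2 : HasSum (f ∘ Sum.inr) y) : HasSum f (x + y) := by
  refine HasSum.add_isCompl Set.isCompl_range_inl_range_inr ?_ ?_
  · let e : α ≃ Set.range (Sum.inl : α → α ⊕ β) := Equiv.ofInjective _ Sum.inl_injective
    have : HasSum ((f ∘ Subtype.val) ∘ e) x := by
      have he : (f ∘ Subtype.val) ∘ e = f ∘ Sum.inl := by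
        funext n; simp only [e, Function.comp_apply, Equiv.ofInjective_apply]
      rw [he]; exact h1
    exact e.hasSum_iff.mp this
  · let e : β ≃ Set.range (Sum.inr : β → α ⊕ β) := Equiv.ofInjective _ Sum.inr_injective
    have : HasSum ((f ∘ Subtype.val) ∘ e) y := by
      have he : (f ∘ Subtype.val) ∘ e = f ∘ Sum.inr := by
        funext n; simp only [e, Function.comp_apply, Equiv.ofInjective_apply]
      rw [he]; exact h2
    exact e.hasSum_iff.mp this

lemma summable_sumType {M : Type*} [AddCommMonoid M] [TopologicalSpace M] [ContinuousAdd M]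
    {α β : Type*} {f : α ⊕ β → M}
    (h1 : Summable (f ∘ Sum.inl)) (h2 : Summable (f ∘ Sum.inr)) : Summable f := by
  obtain ⟨x, h1⟩ := h1; obtain ⟨y, h2⟩ := h2
  exact ⟨x + y, hasSum_sumType h1 h2⟩

lemma tsum_sumType {M : Type*} [AddCommMonoid M] [TopologicalSpace M] [ContinuousAdd M]
    [T2Space M] {α β : Type*} {f : α ⊕ β → M}
    (h1 : Summable (f ∘ Sum.inl)) (h2 : Summable (f ∘ Sum.inr)) :
    ∑' i, f i = (∑' n, f (Sum.inl n)) + ∑' n, f (Sum.inr n) :=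
  (hasSum_sumType h1.hasSum h2.hasSum).tsum_eq

lemma gds_engine {ι : Type*} (σ : ℝ) (c : ι → ℂ) (ν : ι → ℝ)
    (hν : ∀ i, 0 ≤ ν i) (hfin : ∀ B : ℝ, {i | ν i ≤ B}.Finite)
    (hsum : Summable fun i => ‖c i‖ * Real.exp (-(ν i) * σ))
    (hzero : ∀ s : ℝ, σ ≤ s → ∑' i, c i * (Real.exp (-(ν i) * s) : ℂ) = 0)
    (t : ℝ) : ∑ᶠ i ∈ {i | ν i = t}, c i = 0 := by
  -- fibers are finite
  have hfib : ∀ u : ℝ, {i | ν i = u}.Finite := fun u =>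
    (hfin u).subset (fun i hi => le_of_eq hi)
  set S : ℝ → ℂ := fun u => ∑ᶠ i ∈ {i | ν i = u}, c i with hS
  -- summability at every s ≥ σ
  have hsum_s : ∀ s : ℝ, σ ≤ s → Summable fun i => ‖c i‖ * Real.exp (-(ν i) * s) := by
    intro s hs
    refine hsum.of_nonneg_of_le (fun i => by positivity) (fun i => ?_)
    refine mul_le_mul_of_nonneg_left (Real.exp_le_exp.mpr ?_) (norm_nonneg _)
    nlinarith [hν i]
  by_contra hne
  -- the set of bad exponents
  set E : Set ℝ := {u | S u ≠ 0} with hE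
  have htE : t ∈ E := hne
  -- minimal bad exponent
  have hErange : ∀ u ∈ E, ∃ i, ν i = u := by
    intro u hu
    by_contra h
    push_neg at h
    refine hu ?_
    show S u = 0
    have : {i | ν i = u} = ∅ := by
      ext i; simp only [Set.mem_setOf_eq, Set.mem_empty_iff_false, iff_false]
      exact h i
    rw [hS]; simp only; rw [this, finsum_mem_empty]
  obtain ⟨t0, ht0E, ht0min⟩ : ∃ t0 ∈ E, ∀ u ∈ E, t0 ≤ u := by
    have hF : (E ∩ Set.Iic t).Finite := by
      refine ((hfin t).image ν).subset ?_
      rintro u ⟨huE, hut⟩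
      obtain ⟨i, hi⟩ := hErange u huE
      exact ⟨i, by simp only [Set.mem_setOf_eq, hi]; exact hut, hi⟩
    have hFne : (E ∩ Set.Iic t).Nonempty := ⟨t, htE, le_refl t⟩
    obtain ⟨t0, ht0F, ht0m⟩ := Set.exists_min_image _ id hF hFne
    refine ⟨t0, ht0F.1, fun u hu => ?_⟩
    rcases le_or_gt u t with h | h
    · exact ht0m u ⟨hu, h⟩
    · exact le_trans (ht0F.2.trans h.le) le_rfl
  have hSmall : ∀ u, u < t0 → S u = 0 := fun u hu => by
    by_contra h; exact absurd (ht0min u h) (not_le.mpr hu)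
  -- fiber at t0 is nonempty
  have hfib0 : {i | ν i = t0}.Nonempty := by
    by_contra h
    rw [Set.not_nonempty_iff_eq_empty] at h
    refine ht0E ?_
    show S t0 = 0
    rw [hS]
    simp only
    rw [h, finsum_mem_empty]
  -- the key equation
  -- finite fiber sums as Finset sums
  have hSfin : ∀ u : ℝ, S u = ∑ i ∈ (hfib u).toFinset, c i := by
    intro u
    exact finsum_mem_eq_finite_toFinset_sum c (hfib u)
  have hkey : ∀ s : ℝ, σ ≤ s →
      S t0 + ∑' i : ↥{i | ν i ≤ t0}ᶜ, c i * (Real.exp ((t0 - ν i) * s) : ℂ) = 0 := by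
    intro s hs
    classical
    set g : ι → ℂ := fun i => c i * (Real.exp ((t0 - ν i) * s) : ℂ) with hg
    have hgeq : g = fun i => (Real.exp (t0 * s) : ℂ) * (c i * (Real.exp (-(ν i) * s) : ℂ)) := by
      funext i
      show c i * (Real.exp ((t0 - ν i) * s) : ℂ) = _
      have : (t0 - ν i) * s = t0 * s + -(ν i) * s := by ring
      rw [this, Real.exp_add]
      push_cast
      ring
    have hsum1 : Summable fun i => c i * (Real.exp (-(ν i) * s) : ℂ) := by
      refine Summable.of_norm ?_
      refine ((hsum_s s hs).congr (fun i => ?_))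
      rw [norm_mul, Complex.norm_real, Real.norm_eq_abs, Real.abs_exp]
    have hgsum : Summable g := by
      rw [hgeq]; exact hsum1.mul_left _
    have hgzero : ∑' i, g i = 0 := by
      rw [hgeq, tsum_mul_left, hzero s hs, mul_zero]
    have hsplit := Summable.tsum_add_tsum_compl (s := {i | ν i ≤ t0})
      (hgsum.subtype _) (hgsum.subtype _)
    rw [hgzero] at hsplit
    -- compute the finite part
    set D : Finset ι := (hfin t0).toFinset with hD
    have hfinpart : ∑' i : ↥{i | ν i ≤ t0}, g i = S t0 := by
      rw [← Set.Finite.coe_toFinset (hfin t0)]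
      rw [Finset.tsum_subtype']
      rw [← Finset.sum_fiberwise_of_maps_to
        (t := ((hfin t0).toFinset).image ν)
        (fun i hi => Finset.mem_image_of_mem ν hi) g]
      have ht0mem : t0 ∈ ((hfin t0).toFinset).image ν := by
        obtain ⟨i0, hi0⟩ := hfib0
        exact Finset.mem_image.mpr ⟨i0, (Set.Finite.mem_toFinset _).mpr (le_of_eq hi0), hi0⟩
      rw [Finset.sum_eq_single_of_mem t0 ht0mem]
      · have hfilter : ((hfin t0).toFinset).filter (fun i => ν i = t0) = (hfib t0).toFinset := by
          ext i
          simp only [Finset.mem_filter, Set.Finite.mem_toFinset, Set.mem_setOf_eq]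
          exact ⟨fun h => h.2, fun h => ⟨le_of_eq h, h⟩⟩
        rw [hfilter, hSfin]
        refine Finset.sum_congr rfl (fun i hi => ?_)
        rw [Set.Finite.mem_toFinset] at hi
        simp only [Set.mem_setOf_eq] at hi
        show c i * (Real.exp ((t0 - ν i) * s) : ℂ) = c i
        rw [hi, sub_self, zero_mul, Real.exp_zero]
        simp
      · intro u humem hune
        have hult : u < t0 := by
          obtain ⟨i, hiD, hiu⟩ := Finset.mem_image.mp humem
          rw [Set.Finite.mem_toFinset] at hiD
          exact lt_of_le_of_ne (hiu ▸ hiD) hune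
        have hfilter : ((hfin t0).toFinset).filter (fun i => ν i = u) = (hfib u).toFinset := by
          ext i
          simp only [Finset.mem_filter, Set.Finite.mem_toFinset, Set.mem_setOf_eq]
          exact ⟨fun h => h.2, fun h => ⟨h ▸ hult.le, h⟩⟩
        calc ∑ i ∈ ((hfin t0).toFinset).filter (fun i => ν i = u), g i
            = ∑ i ∈ ((hfin t0).toFinset).filter (fun i => ν i = u),
                c i * (Real.exp ((t0 - u) * s) : ℂ) := by
              refine Finset.sum_congr rfl (fun i hi => ?_)
              rw [Finset.mem_filter] at hi
              show c i * (Real.exp ((t0 - ν i) * s) : ℂ) = _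
              rw [hi.2]
          _ = (∑ i ∈ ((hfin t0).toFinset).filter (fun i => ν i = u), c i)
                * (Real.exp ((t0 - u) * s) : ℂ) := by rw [Finset.sum_mul]
          _ = 0 := by rw [hfilter, ← hSfin, hSmall u hult, zero_mul]
    rw [hfinpart] at hsplit
    exact hsplit
  -- tail tends to zero
  have htail : Tendsto (fun s : ℝ => ∑' i : ↥{i | ν i ≤ t0}ᶜ, c i * (Real.exp ((t0 - ν i) * s) : ℂ))
      atTop (nhds 0) := by
    have hlim := tendsto_tsum_of_dominated_convergence
      (f := fun (s : ℝ) (k : ↥{i | ν i ≤ t0}ᶜ) => c k * (Real.exp ((t0 - ν k) * s) : ℂ))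
      (g := fun _ => (0 : ℂ))
      (bound := fun k : ↥{i | ν i ≤ t0}ᶜ => ‖c k‖ * Real.exp ((t0 - ν k) * σ))
      (𝓕 := atTop) ?_ ?_ ?_
    · simpa using hlim
    · -- summability of the bound
      have : Summable fun k : ↥{i | ν i ≤ t0}ᶜ => ‖c k‖ * Real.exp (-(ν (k : ι)) * σ) :=
        hsum.subtype _
      refine (this.mul_left (Real.exp (t0 * σ))).congr (fun k => ?_)
      rw [← mul_assoc, mul_comm (Real.exp (t0 * σ)), mul_assoc, ← Real.exp_add]
      congr 2
      ring
    · -- pointwise limit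
      intro k
      have hk : t0 < ν (k : ι) := not_le.mp k.2
      have h1 : Tendsto (fun s : ℝ => (t0 - ν (k : ι)) * s) atTop atBot := by
        have := tendsto_id (α := ℝ) (x := atTop)
        exact Tendsto.const_mul_atTop_of_neg (by linarith) this
      have h2 : Tendsto (fun s : ℝ => Real.exp ((t0 - ν (k : ι)) * s)) atTop (nhds 0) :=
        Real.tendsto_exp_atBot.comp h1
      have h3 : Tendsto (fun s : ℝ => (Real.exp ((t0 - ν (k : ι)) * s) : ℂ)) atTop (nhds 0) := by
        have := (Complex.continuous_ofReal.tendsto 0).comp h2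
        simpa [Function.comp_def] using this
      have := h3.const_mul (c (k : ι))
      simpa using this
    · -- bound
      filter_upwards [eventually_ge_atTop σ] with s hs
      intro k
      have hk : t0 < ν (k : ι) := not_le.mp k.2
      rw [norm_mul, Complex.norm_real, Real.norm_eq_abs, Real.abs_exp]
      refine mul_le_mul_of_nonneg_left (Real.exp_le_exp.mpr ?_) (norm_nonneg _)
      nlinarith
  have : Tendsto (fun _ : ℝ => -S t0) atTop (nhds 0) := by
    refine htail.congr' ?_
    filter_upwards [eventually_ge_atTop σ] with s hs
    have := hkey s hs
    linear_combination this
  have := tendsto_nhds_unique this tendsto_const_nhds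
  exact ht0E (by simpa [neg_eq_zero] using this.symm)

/-- **Uniqueness of absolutely convergent general Dirichlet series.**
If two absolutely convergent general Dirichlet series agree for all real `s ≥ σ`, then they
coincide term by term after discarding zero coefficients. -/
theorem gds_uniqueness (σ : ℝ) (a b : ℕ → ℂ) (lam mu : ℕ → ℝ)
    (hlam_mono : StrictMono lam) (hlam_nonneg : ∀ n, 0 ≤ lam n)
    (hlam_top : Tendsto lam atTop atTop)
    (hmu_mono : StrictMono mu) (hmu_nonneg : ∀ n, 0 ≤ mu n)
    (hmu_top : Tendsto mu atTop atTop)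
    (ha : Summable fun n => ‖a n‖ * Real.exp (-(lam n) * σ))
    (hb : Summable fun n => ‖b n‖ * Real.exp (-(mu n) * σ))
    (heq : ∀ s : ℝ, σ ≤ s →
      ∑' n, a n * (Real.exp (-(lam n) * s) : ℂ) = ∑' n, b n * (Real.exp (-(mu n) * s) : ℂ)) :
    (∀ n, a n ≠ 0 → ∃ m, mu m = lam n ∧ b m = a n) ∧
      (∀ m, b m ≠ 0 → ∃ n, lam n = mu m ∧ a n = b m) := by
  set c : ℕ ⊕ ℕ → ℂ := Sum.elim a (fun m => -b m) with hc
  set ν : ℕ ⊕ ℕ → ℝ := Sum.elim lam mu with hν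
  have hνn : ∀ i, 0 ≤ ν i := by rintro (n | m); exacts [hlam_nonneg n, hmu_nonneg m]
  -- finiteness of sublevel sets
  have hfin : ∀ B : ℝ, {i : ℕ ⊕ ℕ | ν i ≤ B}.Finite := by
    intro B
    have h1 : {n : ℕ | lam n ≤ B}.Finite := by
      obtain ⟨N, hN⟩ := (hlam_top.eventually_gt_atTop B).exists_forall_of_atTop
      exact (Set.finite_Iio N).subset (fun n hn => by
        by_contra h; exact absurd (hN n (not_lt.mp h)) (not_lt.mpr hn))
    have h2 : {m : ℕ | mu m ≤ B}.Finite := by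
      obtain ⟨N, hN⟩ := (hmu_top.eventually_gt_atTop B).exists_forall_of_atTop
      exact (Set.finite_Iio N).subset (fun n hn => by
        by_contra h; exact absurd (hN n (not_lt.mp h)) (not_lt.mpr hn))
    have : {i : ℕ ⊕ ℕ | ν i ≤ B} ⊆
        (Sum.inl '' {n | lam n ≤ B}) ∪ (Sum.inr '' {m | mu m ≤ B}) := by
      rintro (n | m) hi
      · exact Or.inl ⟨n, hi, rfl⟩
      · exact Or.inr ⟨m, hi, rfl⟩
    exact ((h1.image _).union (h2.image _)).subset this
  -- summability of the merged series
  have hsum : Summable fun i => ‖c i‖ * Real.exp (-(ν i) * σ) := by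
    refine summable_sumType ?_ ?_
    · exact ha.congr (fun n => rfl)
    · refine hb.congr (fun m => ?_)
      simp [hc, hν]
  -- summability of each piece at every s ≥ σ
  have hsumA : ∀ s : ℝ, σ ≤ s → Summable fun n => a n * (Real.exp (-(lam n) * s) : ℂ) := by
    intro s hs
    refine Summable.of_norm (Summable.of_nonneg_of_le (fun n => norm_nonneg _) (fun n => ?_)
      ha)
    rw [norm_mul, Complex.norm_real, Real.norm_eq_abs, Real.abs_exp]
    refine mul_le_mul_of_nonneg_left (Real.exp_le_exp.mpr ?_) (norm_nonneg _)
    nlinarith [hlam_nonneg n]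
  have hsumB : ∀ s : ℝ, σ ≤ s → Summable fun m => b m * (Real.exp (-(mu m) * s) : ℂ) := by
    intro s hs
    refine Summable.of_norm (Summable.of_nonneg_of_le (fun n => norm_nonneg _) (fun n => ?_)
      hb)
    rw [norm_mul, Complex.norm_real, Real.norm_eq_abs, Real.abs_exp]
    refine mul_le_mul_of_nonneg_left (Real.exp_le_exp.mpr ?_) (norm_nonneg _)
    nlinarith [hmu_nonneg n]
  -- the merged series vanishes
  have hzero : ∀ s : ℝ, σ ≤ s → ∑' i, c i * (Real.exp (-(ν i) * s) : ℂ) = 0 := by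
    intro s hs
    rw [tsum_sumType]
    · have e1 : ∑' n, c (Sum.inl n) * (Real.exp (-(ν (Sum.inl n)) * s) : ℂ)
          = ∑' n, a n * (Real.exp (-(lam n) * s) : ℂ) := rfl
      have e2 : ∑' m, c (Sum.inr m) * (Real.exp (-(ν (Sum.inr m)) * s) : ℂ)
          = -∑' m, b m * (Real.exp (-(mu m) * s) : ℂ) := by
        rw [← tsum_neg]
        refine tsum_congr (fun m => ?_)
        simp [hc, hν]
      rw [e1, e2, heq s hs]
      ring
    · exact (hsumA s hs).congr (fun n => rfl)
    · refine ((hsumB s hs).neg).congr (fun m => ?_)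
      simp [hc, hν]
  have hfiber := gds_engine σ c ν hνn hfin hsum hzero
  constructor
  · intro n hn
    have h0 := hfiber (lam n)
    by_cases hm : ∃ m, mu m = lam n
    · obtain ⟨m, hm⟩ := hm
      refine ⟨m, hm, ?_⟩
      have hset : {i : ℕ ⊕ ℕ | ν i = lam n} = {Sum.inl n, Sum.inr m} := by
        ext (k | k) <;>
          simp only [Set.mem_setOf_eq, Set.mem_insert_iff, Set.mem_singleton_iff]
        · constructor
          · intro h
            exact Or.inl (congrArg Sum.inl (hlam_mono.injective (h : lam k = lam n)))
          · rintro (h | h)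
            · cases h; rfl
            · cases h
        · constructor
          · intro h
            exact Or.inr (congrArg Sum.inr (hmu_mono.injective
              ((h : mu k = lam n).trans hm.symm)))
          · rintro (h | h)
            · cases h
            · cases h; exact hm
      rw [hset, finsum_mem_pair (by simp)] at h0
      have : a n + -b m = 0 := h0
      linear_combination -this
    · push_neg at hm
      exfalso
      have hset : {i : ℕ ⊕ ℕ | ν i = lam n} = {Sum.inl n} := by
        ext (k | k) <;> simp only [Set.mem_setOf_eq, Set.mem_singleton_iff]
        · constructor
          · intro h
            exact congrArg Sum.inl (hlam_mono.injective (h : lam k = lam n))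
          · intro h; cases h; rfl
        · constructor
          · intro h; exact absurd h (hm k)
          · intro h; cases h
      rw [hset, finsum_mem_singleton] at h0
      exact hn h0
  · intro m hm
    have h0 := hfiber (mu m)
    by_cases hn : ∃ n, lam n = mu m
    · obtain ⟨n, hn⟩ := hn
      refine ⟨n, hn, ?_⟩
      have hset : {i : ℕ ⊕ ℕ | ν i = mu m} = {Sum.inl n, Sum.inr m} := by
        ext (k | k) <;>
          simp only [Set.mem_setOf_eq, Set.mem_insert_iff, Set.mem_singleton_iff]
        · constructor
          · intro h
            exact Or.inl (congrArg Sum.inl (hlam_mono.injective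
              ((h : lam k = mu m).trans hn.symm)))
          · rintro (h | h)
            · cases h; exact hn
            · cases h
        · constructor
          · intro h
            exact Or.inr (congrArg Sum.inr (hmu_mono.injective (h : mu k = mu m)))
          · rintro (h | h)
            · cases h
            · cases h; rfl
      rw [hset, finsum_mem_pair (by simp)] at h0
      have : a n + -b m = 0 := h0
      linear_combination this
    · push_neg at hn
      exfalso
      have hset : {i : ℕ ⊕ ℕ | ν i = mu m} = {Sum.inr m} := by
        ext (k | k) <;> simp only [Set.mem_setOf_eq, Set.mem_singleton_iff]
        · constructor
          · intro h; exact absurd h (hn k)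
          · intro h; cases h
        · constructor
          · intro h
            exact congrArg Sum.inr (hmu_mono.injective (h : mu k = mu m))
          · intro h; cases h; rfl
      rw [hset, finsum_mem_singleton] at h0
      have : -b m = 0 := h0
      exact hm (neg_eq_zero.mp this)
end

section
/- Let p and q be complex polynomials with q not identically zero. Suppose there exist a real σ, a sequence of complex numbers (a_n)_{n≥1}, and a strictly increasing sequence (λ_n)_{n≥1} of nonnegative reals tending to infinity, such that ∑_{n≥1} |a_n| e^{−λ_n σ} < ∞, q(s) ≠ 0 for all real s ≥ σ, and p(s)/q(s) = ∑_{n≥1} a_n e^{−λ_n s} for all real s ≥ σ. Then the rational function p/q is constant: there exists c ∈ ℂ with p = c·q as polynomials. -/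
open Filter

section Aux

open Polynomial

private lemma poly_eq_zero_of_tendsto' (r : Polynomial ℂ)
    (h : Tendsto (fun s : ℝ => r.eval (s : ℂ)) atTop (nhds 0)) : r = 0 := by
  by_contra hr
  set d := r.natDegree with hd
  have key : ∀ k ∈ Finset.range (d + 1),
      Tendsto (fun s : ℝ => r.coeff k * (s : ℂ) ^ k / (s : ℂ) ^ d) atTop
        (nhds (if k = d then r.coeff d else 0)) := by
    intro k hk
    rcases eq_or_ne k d with hkd | hkd
    · subst hkd
      simp only [if_pos rfl, ↓reduceIte]
      apply Tendsto.congr' _ tendsto_const_nhds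
      filter_upwards [eventually_gt_atTop 0] with s hs
      have : (s : ℂ) ≠ 0 := by exact_mod_cast hs.ne'
      field_simp
    · simp only [if_neg hkd]
      have hklt : k < d := lt_of_le_of_ne (Nat.lt_succ_iff.mp (Finset.mem_range.mp hk)) hkd
      have hreal : Tendsto (fun s : ℝ => ‖r.coeff k‖ * (s ^ (d - k))⁻¹) atTop (nhds 0) := by
        have : Tendsto (fun s : ℝ => (s ^ (d - k))⁻¹) atTop (nhds 0) :=
          (tendsto_pow_atTop (Nat.sub_ne_zero_of_lt hklt)).inv_tendsto_atTop
        simpa using this.const_mul ‖r.coeff k‖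
      apply squeeze_zero_norm' _ hreal
      filter_upwards [eventually_gt_atTop 0] with s hs
      have hsC : (s : ℂ) ≠ 0 := by exact_mod_cast hs.ne'
      have : ‖r.coeff k * (s : ℂ) ^ k / (s : ℂ) ^ d‖
          = ‖r.coeff k‖ * (s ^ (d - k))⁻¹ := by
        rw [norm_div, norm_mul, norm_pow, norm_pow, Complex.norm_real,
          Real.norm_eq_abs, abs_of_pos hs]
        rw [mul_div_assoc, mul_eq_mul_left_iff]
        left
        rw [inv_eq_one_div,
          div_eq_div_iff (by positivity) (by positivity), one_mul,
          ← pow_add, Nat.add_sub_cancel' hklt.le]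
      exact this.le
  have h1 : Tendsto (fun s : ℝ => r.eval (s : ℂ) / (s : ℂ) ^ d) atTop
      (nhds (r.coeff d)) := by
    have hsum := tendsto_finset_sum (Finset.range (d + 1)) key
    have : (∑ k ∈ Finset.range (d + 1), if k = d then r.coeff d else 0) = r.coeff d := by
      simp
    rw [this] at hsum
    apply hsum.congr
    intro s
    rw [eval_eq_sum_range, Finset.sum_div]
  have hn : Tendsto (fun s : ℝ => ‖r.eval (s : ℂ)‖) atTop (nhds 0) := by
    have := h.norm
    rwa [norm_zero] at this
  have h2 : Tendsto (fun s : ℝ => r.eval (s : ℂ) / (s : ℂ) ^ d) atTop (nhds 0) := by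
    apply squeeze_zero_norm' _ hn
    filter_upwards [eventually_ge_atTop 1] with s hs
    rw [norm_div]
    apply div_le_of_le_mul₀ (norm_nonneg _) (norm_nonneg _)
    apply le_mul_of_one_le_right (norm_nonneg _)
    rw [norm_pow, Complex.norm_real, Real.norm_eq_abs, abs_of_pos (by linarith)]
    exact one_le_pow₀ hs
  have := tendsto_nhds_unique h1 h2
  exact hr (leadingCoeff_eq_zero.mp this)

private lemma tail_bound' (b : ℕ → ℂ) (l : ℕ → ℝ) (σ μ : ℝ) (hμ : ∀ n, μ ≤ l n)
    (hb : Summable fun n => ‖b n‖ * Real.exp (-(l n) * σ)) (s : ℝ) (hs : σ ≤ s) :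
    ‖∑' n, b n * (Real.exp (-(l n) * s) : ℂ)‖ ≤
      (Real.exp (μ * σ) * ∑' n, ‖b n‖ * Real.exp (-(l n) * σ)) * Real.exp (-μ * s) := by
  have hterm : ∀ n, ‖b n * (Real.exp (-(l n) * s) : ℂ)‖ ≤
      (‖b n‖ * Real.exp (-(l n) * σ)) * Real.exp (-μ * (s - σ)) := by
    intro n
    rw [norm_mul, Complex.norm_real, Real.norm_eq_abs, abs_of_pos (Real.exp_pos _)]
    rw [mul_assoc, ← Real.exp_add]
    apply mul_le_mul_of_nonneg_left _ (norm_nonneg _)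
    apply Real.exp_le_exp.mpr
    nlinarith [hμ n, sub_nonneg.mpr hs]
  have hsum2 : Summable fun n => (‖b n‖ * Real.exp (-(l n) * σ)) * Real.exp (-μ * (s - σ)) :=
    hb.mul_right _
  have hsum1 : Summable fun n => ‖b n * (Real.exp (-(l n) * s) : ℂ)‖ :=
    Summable.of_nonneg_of_le (fun n => norm_nonneg _) hterm hsum2
  calc ‖∑' n, b n * (Real.exp (-(l n) * s) : ℂ)‖
      ≤ ∑' n, ‖b n * (Real.exp (-(l n) * s) : ℂ)‖ := norm_tsum_le_tsum_norm hsum1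
    _ ≤ ∑' n, (‖b n‖ * Real.exp (-(l n) * σ)) * Real.exp (-μ * (s - σ)) :=
        Summable.tsum_le_tsum hterm hsum1 hsum2
    _ = (∑' n, ‖b n‖ * Real.exp (-(l n) * σ)) * Real.exp (-μ * (s - σ)) := tsum_mul_right
    _ = (Real.exp (μ * σ) * ∑' n, ‖b n‖ * Real.exp (-(l n) * σ)) * Real.exp (-μ * s) := by
        rw [show -μ * (s - σ) = μ * σ + -μ * s by ring, Real.exp_add]
        ring

private lemma poly_exp_decay' (Q : Polynomial ℝ) (μ : ℝ) (hμ : 0 < μ) :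
    Tendsto (fun s : ℝ => Q.eval s * Real.exp (-μ * s)) atTop (nhds 0) := by
  have h1 := (Q.comp (Polynomial.C μ⁻¹ * Polynomial.X)).tendsto_div_exp_atTop
  have h2 : Tendsto (fun s : ℝ => μ * s) atTop atTop :=
    Tendsto.const_mul_atTop hμ tendsto_id
  have h3 := h1.comp h2
  apply h3.congr
  intro s
  simp only [Function.comp_apply, eval_comp, eval_mul, eval_C, eval_X]
  rw [inv_mul_cancel_left₀ hμ.ne', neg_mul, Real.exp_neg, div_eq_mul_inv]

private lemma norm_eval_le' (q : Polynomial ℂ) (s : ℝ) (hs : 0 ≤ s) :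
    ‖q.eval (s : ℂ)‖ ≤
      (∑ k ∈ Finset.range (q.natDegree + 1),
        Polynomial.C ‖q.coeff k‖ * Polynomial.X ^ k : Polynomial ℝ).eval s := by
  rw [eval_eq_sum_range]
  refine (norm_sum_le _ _).trans ?_
  simp only [eval_finset_sum, eval_mul, eval_C, eval_pow, eval_X]
  apply Finset.sum_le_sum
  intro k _
  rw [norm_mul, norm_pow, Complex.norm_real, Real.norm_eq_abs, abs_of_nonneg hs]

end Aux

/-- **A non-constant rational function is not represented by an absolutely convergent
general Dirichlet series.** If `p/q` is represented on a real half-line `[σ,∞)` by an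
absolutely convergent general Dirichlet series, then `p = c • q` for a constant `c`. -/
theorem rational_fraction_of_gds (p q : Polynomial ℂ) (hq : q ≠ 0)
    (σ : ℝ) (a : ℕ → ℂ) (lam : ℕ → ℝ)
    (hlam_mono : StrictMono lam) (hlam_nonneg : ∀ n, 0 ≤ lam n)
    (hlam_top : Tendsto lam atTop atTop)
    (ha : Summable fun n => ‖a n‖ * Real.exp (-(lam n) * σ))
    (hq0 : ∀ s : ℝ, σ ≤ s → q.eval (s : ℂ) ≠ 0)
    (heq : ∀ s : ℝ, σ ≤ s →
      p.eval (s : ℂ) / q.eval (s : ℂ) = ∑' n, a n * (Real.exp (-(lam n) * s) : ℂ)) :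
    ∃ c : ℂ, p = c • q := by
  -- summability of the complex series at each `s ≥ σ`
  have hsummAt : ∀ s : ℝ, σ ≤ s → Summable fun n => a n * (Real.exp (-(lam n) * s) : ℂ) := by
    intro s hs
    apply Summable.of_norm
    apply Summable.of_nonneg_of_le (fun n => norm_nonneg _) _ ha
    intro n
    rw [norm_mul, Complex.norm_real, Real.norm_eq_abs, abs_of_pos (Real.exp_pos _)]
    apply mul_le_mul_of_nonneg_left _ (norm_nonneg _)
    apply Real.exp_le_exp.mpr
    nlinarith [hlam_nonneg n]
  -- Step A: the series tends to a constant `c` exponentially fast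
  obtain ⟨c, μ, C0, hμ, hC0, hbound⟩ :
      ∃ (c : ℂ) (μ C0 : ℝ), 0 < μ ∧ 0 ≤ C0 ∧ ∀ s : ℝ, σ ≤ s →
        ‖(∑' n, a n * (Real.exp (-(lam n) * s) : ℂ)) - c‖ ≤ C0 * Real.exp (-μ * s) := by
    rcases (hlam_nonneg 0).eq_or_lt with h0 | h0
    · -- lam 0 = 0 : limit is a 0
      have h1 : 0 < lam 1 := by
        have := hlam_mono (show (0:ℕ) < 1 by norm_num)
        linarith
      have ha' : Summable fun n => ‖a (n + 1)‖ * Real.exp (-(lam (n + 1)) * σ) :=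
        (summable_nat_add_iff 1).mpr ha
      refine ⟨a 0, lam 1,
        Real.exp (lam 1 * σ) * ∑' n, ‖a (n + 1)‖ * Real.exp (-(lam (n + 1)) * σ),
        h1, mul_nonneg (Real.exp_pos _).le (tsum_nonneg fun n => by positivity), ?_⟩
      intro s hs
      have hsplit : (∑' n, a n * (Real.exp (-(lam n) * s) : ℂ)) - a 0
          = ∑' n, a (n + 1) * (Real.exp (-(lam (n + 1)) * s) : ℂ) := by
        rw [Summable.tsum_eq_zero_add (hsummAt s hs)]
        rw [← h0]
        norm_num
      rw [hsplit]
      exact tail_bound' (fun n => a (n + 1)) (fun n => lam (n + 1)) σ (lam 1)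
        (fun n => hlam_mono.monotone (Nat.succ_le_succ (Nat.zero_le n))) ha' s hs
    · -- lam 0 > 0 : limit is 0
      refine ⟨0, lam 0, Real.exp (lam 0 * σ) * ∑' n, ‖a n‖ * Real.exp (-(lam n) * σ),
        h0, mul_nonneg (Real.exp_pos _).le (tsum_nonneg fun n => by positivity), ?_⟩
      intro s hs
      rw [sub_zero]
      exact tail_bound' a lam σ (lam 0) (fun n => hlam_mono.monotone (Nat.zero_le n)) ha s hs
  -- Step B: the polynomial r = p - c q tends to 0 along the real axis
  set r : Polynomial ℂ := p - Polynomial.C c * q with hr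
  set Q : Polynomial ℝ :=
    ∑ k ∈ Finset.range (q.natDegree + 1), Polynomial.C ‖q.coeff k‖ * Polynomial.X ^ k with hQ
  have hQnonneg : ∀ s : ℝ, 0 ≤ s → 0 ≤ Q.eval s := by
    intro s hs
    rw [hQ]
    simp only [Polynomial.eval_finset_sum, Polynomial.eval_mul, Polynomial.eval_C,
      Polynomial.eval_pow, Polynomial.eval_X]
    exact Finset.sum_nonneg fun k _ => by positivity
  have hrbound : ∀ s : ℝ, max σ 0 ≤ s →
      ‖r.eval (s : ℂ)‖ ≤ Q.eval s * (C0 * Real.exp (-μ * s)) := by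
    intro s hs
    have hsσ : σ ≤ s := le_trans (le_max_left _ _) hs
    have hs0 : (0:ℝ) ≤ s := le_trans (le_max_right _ _) hs
    have hpq : p.eval (s : ℂ)
        = (∑' n, a n * (Real.exp (-(lam n) * s) : ℂ)) * q.eval (s : ℂ) :=
      (div_eq_iff (hq0 s hsσ)).mp (heq s hsσ)
    have hre : r.eval (s : ℂ)
        = q.eval (s : ℂ) * ((∑' n, a n * (Real.exp (-(lam n) * s) : ℂ)) - c) := by
      rw [hr]
      simp only [Polynomial.eval_sub, Polynomial.eval_mul, Polynomial.eval_C]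
      rw [hpq]; ring
    rw [hre, norm_mul]
    exact mul_le_mul (norm_eval_le' q s hs0) (hbound s hsσ) (norm_nonneg _)
      (hQnonneg s hs0)
  have htends : Tendsto (fun s : ℝ => r.eval (s : ℂ)) atTop (nhds 0) := by
    have hdecay : Tendsto (fun s : ℝ => Q.eval s * (C0 * Real.exp (-μ * s))) atTop (nhds 0) := by
      have := poly_exp_decay' (Polynomial.C C0 * Q) μ hμ
      apply this.congr
      intro s
      rw [Polynomial.eval_mul, Polynomial.eval_C]
      ring
    apply squeeze_zero_norm' _ hdecay
    filter_upwards [eventually_ge_atTop (max σ 0)] with s hs using hrbound s hs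
  have hr0 : r = 0 := poly_eq_zero_of_tendsto' r htends
  refine ⟨c, ?_⟩
  rw [Polynomial.smul_eq_C_mul]
  rw [hr] at hr0
  linear_combination (norm := ring_nf) hr0
end

section
/- Let μ be a (nonnegative) measure on [0,∞) and let h : [0,∞) → ℂ be μ-integrable such that ∫_{[0,∞)} e^{−s t} h(t) dμ(t) = 0 for every real s ≥ 0. Then for every continuous function f : [0,1] → ℂ one has ∫_{[0,∞)} f(e^{−t}) h(t) dμ(t) = 0. -/
open MeasureTheory Polynomial

lemma mapsExp (t : ℝ) (ht : t ∈ Set.Ici (0:ℝ)) : Real.exp (-t) ∈ Set.Icc (0:ℝ) 1 :=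
  ⟨(Real.exp_pos _).le, Real.exp_le_one_iff.mpr (neg_nonpos.mpr ht)⟩

lemma integrableOn_comp (μ : Measure ℝ) (h : ℝ → ℂ) (hi : IntegrableOn h (Set.Ici 0) μ)
    (g : ℝ → ℝ) (hg : ContinuousOn g (Set.Icc 0 1)) (M : ℝ)
    (hM : ∀ x ∈ Set.Icc (0:ℝ) 1, |g x| ≤ M) :
    IntegrableOn (fun t => (g (Real.exp (-t)) : ℂ) * h t) (Set.Ici 0) μ := by
  apply (hi.norm.const_mul M).mono'
  · exact ((Complex.continuous_ofReal.comp_continuousOn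
      (hg.comp (Real.continuous_exp.comp continuous_neg).continuousOn
        mapsExp)).aestronglyMeasurable measurableSet_Ici).mul hi.aestronglyMeasurable
  · filter_upwards [ae_restrict_mem measurableSet_Ici] with t ht
    rw [norm_mul, Complex.norm_real]
    exact mul_le_mul_of_nonneg_right (hM _ (mapsExp t ht)) (norm_nonneg _)

lemma real_case (μ : Measure ℝ) (h : ℝ → ℂ)
    (hi : IntegrableOn h (Set.Ici 0) μ)
    (heq : ∀ s : ℝ, 0 ≤ s → ∫ t in Set.Ici (0 : ℝ), (Real.exp (-(s * t)) : ℂ) * h t ∂μ = 0)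
    (g : ℝ → ℝ) (hg : ContinuousOn g (Set.Icc 0 1)) :
    ∫ t in Set.Ici (0 : ℝ), (g (Real.exp (-t)) : ℂ) * h t ∂μ = 0 := by
  -- Step B: polynomials
  have hmono : ∀ k : ℕ, IntegrableOn (fun t => ((Real.exp (-t) : ℝ) : ℂ) ^ k * h t)
      (Set.Ici 0) μ := by
    intro k
    have := integrableOn_comp μ h hi (fun x => x ^ k)
      (continuous_pow k).continuousOn 1 (fun x hx => by
        rw [abs_pow]
        exact pow_le_one₀ (abs_nonneg _) (abs_le.mpr ⟨by linarith [hx.1], hx.2⟩))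
    simpa using this
  have hpow : ∀ k : ℕ, ∫ t in Set.Ici (0 : ℝ), ((Real.exp (-t) : ℝ) : ℂ) ^ k * h t ∂μ = 0 := by
    intro k
    have := heq k (Nat.cast_nonneg k)
    rw [← this]
    apply setIntegral_congr_fun measurableSet_Ici
    intro t ht
    simp only
    rw [← Complex.ofReal_pow, ← Real.exp_nat_mul]
    ring_nf
  have hpoly : ∀ p : ℝ[X], ∫ t in Set.Ici (0 : ℝ), ((p.eval (Real.exp (-t)) : ℝ) : ℂ) * h t ∂μ = 0 := by
    intro p
    have hre : ∀ t : ℝ, ((p.eval (Real.exp (-t)) : ℝ) : ℂ) * h t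
        = ∑ k ∈ Finset.range (p.natDegree + 1),
          ((p.coeff k : ℝ) : ℂ) * (((Real.exp (-t) : ℝ) : ℂ) ^ k * h t) := by
      intro t
      rw [p.eval_eq_sum_range]
      push_cast
      rw [Finset.sum_mul]
      congr 1; ext k; ring
    simp_rw [hre]
    rw [integral_finset_sum]
    · exact Finset.sum_eq_zero fun k _ => by
        rw [integral_const_mul, hpow k, mul_zero]
    · exact fun k _ => ((hmono k).const_mul _)
  -- Step C: epsilon argument
  have key : ∀ ε : ℝ, 0 < ε →
      ‖∫ t in Set.Ici (0 : ℝ), (g (Real.exp (-t)) : ℂ) * h t ∂μ‖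
        ≤ ε * ∫ t in Set.Ici (0 : ℝ), ‖h t‖ ∂μ := by
    intro ε hε
    obtain ⟨p, hp⟩ := exists_polynomial_near_of_continuousOn 0 1 g hg ε hε
    -- integrability of (g - p∘exp) * h
    obtain ⟨M, hMbd⟩ := IsCompact.exists_bound_of_continuousOn isCompact_Icc hg
    have hgint := integrableOn_comp μ h hi g hg M (fun x hx => by
      simpa [Real.norm_eq_abs] using hMbd x hx)
    have hpint := integrableOn_comp μ h hi (fun x => p.eval x) p.continuous_aeval.continuousOn
      (M + ε) (fun x hx => by
        have := hp x hx
        have := hMbd x hx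
        rw [Real.norm_eq_abs] at this
        have := abs_sub_abs_le_abs_sub (p.eval x) (g x)
        linarith)
    have split : (∫ t in Set.Ici (0 : ℝ), (g (Real.exp (-t)) : ℂ) * h t ∂μ)
        = ∫ t in Set.Ici (0 : ℝ),
            (((g (Real.exp (-t)) : ℝ) : ℂ) - ((p.eval (Real.exp (-t)) : ℝ) : ℂ)) * h t ∂μ := by
      rw [show (fun t => (((g (Real.exp (-t)) : ℝ) : ℂ) - ((p.eval (Real.exp (-t)) : ℝ) : ℂ)) * h t)
          = fun t => ((g (Real.exp (-t)) : ℝ) : ℂ) * h t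
              - ((p.eval (Real.exp (-t)) : ℝ) : ℂ) * h t from funext fun t => by ring]
      rw [integral_sub hgint hpint, hpoly p, sub_zero]
    rw [split]
    calc ‖∫ t in Set.Ici (0 : ℝ),
            (((g (Real.exp (-t)) : ℝ) : ℂ) - ((p.eval (Real.exp (-t)) : ℝ) : ℂ)) * h t ∂μ‖
        ≤ ∫ t in Set.Ici (0 : ℝ), ε * ‖h t‖ ∂μ := by
          apply norm_integral_le_of_norm_le (hi.norm.const_mul ε)
          filter_upwards [ae_restrict_mem measurableSet_Ici] with t ht
          rw [norm_mul, ← Complex.ofReal_sub, Complex.norm_real, Real.norm_eq_abs, abs_sub_comm]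
          exact mul_le_mul_of_nonneg_right (le_of_lt (hp _ (mapsExp t ht))) (norm_nonneg _)
      _ = ε * ∫ t in Set.Ici (0 : ℝ), ‖h t‖ ∂μ := integral_const_mul ε _
  by_contra hne
  have hpos : 0 < ‖∫ t in Set.Ici (0 : ℝ), (g (Real.exp (-t)) : ℂ) * h t ∂μ‖ :=
    norm_pos_iff.mpr hne
  set C := ∫ t in Set.Ici (0 : ℝ), ‖h t‖ ∂μ with hC
  have hC0 : 0 ≤ C := integral_nonneg fun t => norm_nonneg _
  rcases eq_or_lt_of_le hC0 with hC0' | hC0'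
  · have := key 1 one_pos
    rw [← hC0'] at this
    linarith
  · have := key (‖∫ t in Set.Ici (0 : ℝ), (g (Real.exp (-t)) : ℂ) * h t ∂μ‖ / (2 * C))
      (by positivity)
    have h2 : ‖∫ t in Set.Ici (0 : ℝ), (g (Real.exp (-t)) : ℂ) * h t ∂μ‖ / (2 * C) * C
        = ‖∫ t in Set.Ici (0 : ℝ), (g (Real.exp (-t)) : ℂ) * h t ∂μ‖ / 2 := by
      field_simp
    rw [h2] at this
    linarith
/-- **Stone–Weierstrass step of the Laplace uniqueness theorem.**
If `h` is `μ`-integrable on `[0,∞)` and `∫ e^{-st} h(t) dμ = 0` for every real `s ≥ 0`, then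
`∫ f(e^{-t}) h(t) dμ = 0` for every function `f` continuous on `[0,1]`. -/
theorem integral_comp_exp_eq_zero (μ : Measure ℝ) (h : ℝ → ℂ)
    (hi : IntegrableOn h (Set.Ici 0) μ)
    (heq : ∀ s : ℝ, 0 ≤ s → ∫ t in Set.Ici (0 : ℝ), (Real.exp (-(s * t)) : ℂ) * h t ∂μ = 0) :
    ∀ f : ℝ → ℂ, ContinuousOn f (Set.Icc 0 1) →
      ∫ t in Set.Ici (0 : ℝ), f (Real.exp (-t)) * h t ∂μ = 0 := by
  intro f hf
  have hre : ContinuousOn (fun x => (f x).re) (Set.Icc 0 1) :=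
    Complex.continuous_re.comp_continuousOn hf
  have him : ContinuousOn (fun x => (f x).im) (Set.Icc 0 1) :=
    Complex.continuous_im.comp_continuousOn hf
  obtain ⟨M, hM⟩ := IsCompact.exists_bound_of_continuousOn isCompact_Icc hf
  have hMre : ∀ x ∈ Set.Icc (0:ℝ) 1, |(f x).re| ≤ M := fun x hx =>
    (Complex.abs_re_le_norm _).trans (hM x hx)
  have hMim : ∀ x ∈ Set.Icc (0:ℝ) 1, |(f x).im| ≤ M := fun x hx =>
    (Complex.abs_im_le_norm _).trans (hM x hx)
  have i1 := integrableOn_comp μ h hi (fun x => (f x).re) hre M hMre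
  have i2 := integrableOn_comp μ h hi (fun x => (f x).im) him M hMim
  have split : ∀ t : ℝ, f (Real.exp (-t)) * h t
      = ((f (Real.exp (-t))).re : ℂ) * h t
        + Complex.I * (((f (Real.exp (-t))).im : ℂ) * h t) := by
    intro t
    rw [← Complex.re_add_im (f (Real.exp (-t)))]
    ring_nf
    rw [Complex.re_add_im]
    ring
  simp_rw [split]
  rw [integral_add i1 (i2.const_mul _), integral_const_mul,
    real_case μ h hi heq _ hre, real_case μ h hi heq _ him, mul_zero, add_zero]
end

section
/- Let μ be a (nonnegative) measure on [0,∞) and let h : [0,∞) → ℂ be μ-integrable such that ∫_{[0,∞)} f(e^{−t}) h(t) dμ(t) = 0 for every continuous function f : [0,1] → ℂ. Then ∫_{[a,b]} h(t) dμ(t) = 0 for all reals 0 ≤ a ≤ b, and consequently h = 0 μ-almost everywhere. -/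
open MeasureTheory Filter Metric Set

/-- **Final step of the Laplace uniqueness theorem.**
If `h` is `μ`-integrable on `[0,∞)` and `∫ f(e^{-t}) h(t) dμ = 0` for every function `f`
continuous on `[0,1]`, then `∫_{[a,b]} h dμ = 0` for all `0 ≤ a ≤ b`, and consequently
`h = 0` `μ`-almost everywhere on `[0,∞)`. -/
theorem measure_zero_of_integral_comp_exp (μ : Measure ℝ) (h : ℝ → ℂ)
    (hi : IntegrableOn h (Set.Ici 0) μ)
    (heq : ∀ f : ℝ → ℂ, ContinuousOn f (Set.Icc 0 1) →
      ∫ t in Set.Ici (0 : ℝ), f (Real.exp (-t)) * h t ∂μ = 0) :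
    (∀ a b : ℝ, 0 ≤ a → a ≤ b → ∫ t in Set.Icc a b, h t ∂μ = 0) ∧
      (∀ᵐ t ∂μ.restrict (Set.Ici 0), h t = 0) := by
  set ν := μ.restrict (Set.Ici 0) with hνdef
  have key : ∀ a b : ℝ, 0 ≤ a → a ≤ b → ∫ t in Set.Icc a b, h t ∂μ = 0 := by
    intro a b ha hab
    set c := Real.exp (-b) with hc
    set d := Real.exp (-a) with hd
    have hcd : c ≤ d := Real.exp_le_exp.2 (by linarith)
    have hcdne : (Set.Icc c d).Nonempty := Set.nonempty_Icc.2 hcd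
    set g : ℕ → ℝ → ℝ := fun n x => max 0 (1 - ((n : ℝ) + 1) * infDist x (Set.Icc c d)) with hg
    have hgc : ∀ n, Continuous (g n) := fun n =>
      continuous_const.max (continuous_const.sub (continuous_const.mul (continuous_infDist_pt _)))
    have hg0 : ∀ n x, 0 ≤ g n x := fun n x => le_max_left _ _
    have hg1 : ∀ n x, g n x ≤ 1 := by
      intro n x
      refine max_le zero_le_one ?_
      have : 0 ≤ ((n : ℝ) + 1) * infDist x (Set.Icc c d) :=
        mul_nonneg (by positivity) infDist_nonneg
      linarith
    -- membership equivalence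
    have hmem : ∀ t : ℝ, Real.exp (-t) ∈ Set.Icc c d ↔ t ∈ Set.Icc a b := by
      intro t
      simp only [Set.mem_Icc, hc, hd, Real.exp_le_exp]
      constructor <;> intro ⟨h1, h2⟩ <;> constructor <;> linarith
    -- each integral vanishes
    have hint : ∀ n, ∫ t in Set.Ici (0 : ℝ), ((g n (Real.exp (-t)) : ℝ) : ℂ) * h t ∂μ = 0 := by
      intro n
      exact heq (fun x => ((g n x : ℝ) : ℂ))
        ((Complex.continuous_ofReal.comp (hgc n)).continuousOn)
    -- dominated convergence
    have hlim : Tendsto (fun n => ∫ t, ((g n (Real.exp (-t)) : ℝ) : ℂ) * h t ∂ν) atTop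
        (nhds (∫ t, (Set.Icc a b).indicator h t ∂ν)) := by
      apply tendsto_integral_of_dominated_convergence (fun t => ‖h t‖)
      · intro n
        exact ((Complex.continuous_ofReal.comp
          ((hgc n).comp (Real.continuous_exp.comp continuous_neg))).aestronglyMeasurable).mul
          hi.aestronglyMeasurable
      · exact hi.norm
      · intro n
        filter_upwards with t
        rw [norm_mul, Complex.norm_real]
        calc ‖g n (Real.exp (-t))‖ * ‖h t‖
            ≤ 1 * ‖h t‖ := by
              apply mul_le_mul_of_nonneg_right _ (norm_nonneg _)
              rw [Real.norm_eq_abs, abs_of_nonneg (hg0 _ _)]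
              exact hg1 _ _
          _ = ‖h t‖ := one_mul _
      · filter_upwards with t
        by_cases ht : t ∈ Set.Icc a b
        · have hmem' : Real.exp (-t) ∈ Set.Icc c d := (hmem t).2 ht
          have : ∀ n, ((g n (Real.exp (-t)) : ℝ) : ℂ) * h t = h t := by
            intro n
            have : infDist (Real.exp (-t)) (Set.Icc c d) = 0 := infDist_zero_of_mem hmem'
            simp [hg, this]
          rw [Set.indicator_of_mem ht]
          simpa [this] using tendsto_const_nhds
        · have hmem' : Real.exp (-t) ∉ Set.Icc c d := fun hx => ht ((hmem t).1 hx)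
          have hpos : 0 < infDist (Real.exp (-t)) (Set.Icc c d) :=
            (isClosed_Icc.notMem_iff_infDist_pos hcdne).1 hmem'
          rw [Set.indicator_of_notMem ht]
          apply Tendsto.congr' _ tendsto_const_nhds
          obtain ⟨N, hN⟩ := exists_nat_ge (1 / infDist (Real.exp (-t)) (Set.Icc c d))
          filter_upwards [eventually_ge_atTop N] with n hn
          have h1 : 1 ≤ ((n : ℝ) + 1) * infDist (Real.exp (-t)) (Set.Icc c d) := by
            rw [div_le_iff₀ hpos] at hN
            have hNn : (N : ℝ) ≤ (n : ℝ) := Nat.cast_le.2 hn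
            nlinarith [hpos.le]
          have : g n (Real.exp (-t)) = 0 := max_eq_left (by linarith)
          simp [this]
    have hzero : ∫ t, (Set.Icc a b).indicator h t ∂ν = 0 :=
      tendsto_nhds_unique (hlim.congr fun n => hint n) tendsto_const_nhds
    have hinter : Set.Icc a b ∩ Set.Ici (0 : ℝ) = Set.Icc a b :=
      Set.inter_eq_self_of_subset_left ((Set.Icc_subset_Ici_self).trans (Set.Ici_subset_Ici.2 ha))
    rw [integral_indicator measurableSet_Icc, hνdef,
      Measure.restrict_restrict measurableSet_Icc, hinter] at hzero
    exact hzero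
  refine ⟨key, ?_⟩
  have hiν : Integrable h ν := hi
  have htot : ∫ t, h t ∂ν = 0 := by
    simpa using heq (fun _ => 1) continuousOn_const
  have hIic : ∀ s ∈ Set.range (Set.Iic : ℝ → Set ℝ), ∫ t in s, h t ∂ν = 0 := by
    rintro s ⟨b, rfl⟩
    rw [hνdef, Measure.restrict_restrict measurableSet_Iic]
    rcases le_or_gt 0 b with hb | hb
    · have : Set.Iic b ∩ Set.Ici (0 : ℝ) = Set.Icc 0 b := by
        ext x; simp [Set.mem_Icc, and_comm]
      rw [this]
      exact key 0 b le_rfl hb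
    · have : Set.Iic b ∩ Set.Ici (0 : ℝ) = ∅ := by
        ext x; simp only [Set.mem_inter_iff, Set.mem_Iic, Set.mem_Ici, Set.mem_empty_iff_false,
          iff_false, not_and, not_le]
        intro hx; linarith
      simp [this]
  have hall : ∀ ⦃s : Set ℝ⦄, MeasurableSet s → ∫ t in s, h t ∂ν = 0 := by
    have hgen : (inferInstance : MeasurableSpace ℝ) =
        MeasurableSpace.generateFrom (Set.range (Set.Iic : ℝ → Set ℝ)) := by
      rw [BorelSpace.measurable_eq (α := ℝ), borel_eq_generateFrom_Iic]
    refine MeasurableSpace.induction_on_inter hgen isPiSystem_Iic ?_ hIic ?_ ?_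
    · simp
    · intro s hs hsz
      have hadd := integral_add_compl hs hiν
      rw [hsz, zero_add] at hadd
      rw [hadd, htot]
    · intro f hd hm hC
      rw [integral_iUnion hm hd hiν.integrableOn]
      simp [hC]
  exact hiν.ae_eq_zero_of_forall_setIntegral_eq_zero (fun s hs _ => hall hs)
end
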